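/- Let G be a directed network with integer costs, no non-positive circuits, admissible state x, and sink nodes with zero state. If a token injected at node i travels a path p = {i = h_1, ..., h_r = j} where each successive transition is permitted by the threshold rule (with equality made strict by the moving token) and stops at j (or exits at a sink j), then L(p) = x_i - x_j; in particular, p is a shortest path from i to j, i.e., every other path p' from i to j satisfies L(p') ≥ L(p). -/

import Mathlib

def arcCost {V : Type*} (γ : V → V → ℤ) (p : List V) : ℤ :=
  ((p.zip p.tail).map fun q => γ q.1 q.2).sum

def IsWalk {V : Type*} (A : V → V → Prop) (i j : V) (p : List V) : Prop :=
  p.Chain' A ∧ p.head? = some i ∧ p.getLast? = some j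

def IsPath {V : Type*} (A : V → V → Prop) (i j : V) (p : List V) : Prop :=
  IsWalk A i j p ∧ p.Nodup

/-- A directed circuit: a walk of at least one arc whose first and last nodes coincide. -/
def IsCircuit {V : Type*} (A : V → V → Prop) (p : List V) : Prop :=
  p.Chain' A ∧ 2 ≤ p.length ∧ p.head? = p.getLast?

lemma telescope {V : Type*} (x : V → ℤ) :
    ∀ (p : List V) (i j : V), p.head? = some i → p.getLast? = some j →
      ((p.zip p.tail).map fun q => x q.1 - x q.2).sum = x i - x j
  | [], i, j, h, _ => by simp at h
  | [a], i, j, hi, hj => by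
      simp at hi hj; subst hi hj; simp
  | a :: b :: t, i, j, hi, hj => by
      simp at hi; subst hi
      have := telescope x (b :: t) b j rfl (by simpa using hj)
      simp only [List.zip_cons_cons, List.tail_cons, List.map_cons, List.sum_cons] at this ⊢
      omega

lemma chain'_zip {V : Type*} (A : V → V → Prop) :
    ∀ (p : List V), p.Chain' A → ∀ q ∈ p.zip p.tail, A q.1 q.2
  | [], _, q, hq => by simp at hq
  | [a], _, q, hq => by simp at hq
  | a :: b :: t, h, q, hq => by
      simp only [List.Chain', List.isChain_cons_cons] at h
      simp only [List.zip_cons_cons, List.tail_cons, List.mem_cons] at hq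
      rcases hq with rfl | hq
      · exact h.1
      · exact chain'_zip A (b :: t) h.2 q hq

/-- if the admissible state `x` permits a token injected at `i` to traverse
the path `p` to its destination `j` (each transition permitted by the threshold rule),
then `L(p) = x i - x j` and `p` is a shortest path from `i` to `j`. -/
theorem traversed_path_is_shortest {V : Type*} (A : V → V → Prop) (γ : V → V → ℤ)
    (x : V → ℤ) (i j : V) (p : List V)
    (hcirc : ∀ c, IsCircuit A c → 0 < arcCost γ c)
    (hadm : ∀ a b, A a b → x a - x b ≤ γ a b)
    (hpath : IsPath A i j p)
    (hperm : ∀ q ∈ p.zip p.tail, γ q.1 q.2 ≤ x q.1 - x q.2) :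
    arcCost γ p = x i - x j ∧
      ∀ p', IsPath A i j p' → arcCost γ p ≤ arcCost γ p' := by
  obtain ⟨⟨hch, hh, hl⟩, _⟩ := hpath
  have key : arcCost γ p = x i - x j := by
    rw [arcCost, ← telescope x p i j hh hl]
    congr 1
    apply List.map_congr_left
    intro q hq
    have h1 := hperm q hq
    have h2 := hadm q.1 q.2 (chain'_zip A p hch q hq)
    omega
  refine ⟨key, fun p' hp' => ?_⟩
  obtain ⟨⟨hch', hh', hl'⟩, _⟩ := hp'
  rw [key, ← telescope x p' i j hh' hl']
  exact List.sum_le_sum fun q hq => hadm q.1 q.2 (chain'_zip A p' hch' q hq)
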